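/- Let x,y,z ≥ 0 with x ≤ 1 and 2y+z ≤ 1, and set s₁ = √(1−x), s₂ = √(1−2y−z). Then for every ρ ∈ M_4(ℂ), the Pauli twirl (1/16) Σ_{P ∈ P₂} P Φ_{x,y,z}(P ρ P†) P† equals the Pauli channel Σ_{P ∈ P₂} q_P · P ρ P†, where q_{𝟙⊗𝟙} = ((1+2s₁+s₂)/4)², q_{𝟙⊗Z} = q_{Z⊗𝟙} = ((1−s₂)/4)², q_{Z⊗Z} = ((1−2s₁+s₂)/4)², q_P = ((√x+√y)/4)² for P ∈ {𝟙⊗X, 𝟙⊗Y, X⊗𝟙, Y⊗𝟙}, q_P = ((√x−√y)/4)² for P ∈ {Z⊗X, Z⊗Y, X⊗Z, Y⊗Z}, and q_P = z/16 for P ∈ {X⊗X, X⊗Y, Y⊗X, Y⊗Y}. -/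

import Mathlib

open Matrix Kronecker

/-- The four Pauli matrices `𝟙, X, Y, Z`. -/
noncomputable def pauli : Fin 4 → Matrix (Fin 2) (Fin 2) ℂ
  | 0 => !![1, 0; 0, 1]
  | 1 => !![0, 1; 1, 0]
  | 2 => !![0, -Complex.I; Complex.I, 0]
  | 3 => !![1, 0; 0, -1]

/-- Kraus operators of the two-qubit amplitude damping channel `Φ_{x,y,z}`, acting on
`ℂ⁴ = ℂ² ⊗ ℂ²` with basis `e_0 = e_{(0,0)}, e_1 = e_{(0,1)}, e_2 = e_{(1,0)},
e_3 = e_{(1,1)}` indexed by `Fin 2 × Fin 2`. -/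
noncomputable def ADk (x y z : ℝ) : Fin 4 → Matrix (Fin 2 × Fin 2) (Fin 2 × Fin 2) ℂ
  | 0 => Matrix.diagonal (fun p => if p = ((0 : Fin 2), (0 : Fin 2)) then 1
          else if p = ((1 : Fin 2), (1 : Fin 2)) then (Real.sqrt (1 - 2*y - z) : ℂ)
          else (Real.sqrt (1 - x) : ℂ))
  | 1 => Matrix.single (0, 0) (0, 1) (Real.sqrt x : ℂ)
        + Matrix.single (1, 0) (1, 1) (Real.sqrt y : ℂ)
  | 2 => Matrix.single (0, 0) (1, 0) (Real.sqrt x : ℂ)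
        + Matrix.single (0, 1) (1, 1) (Real.sqrt y : ℂ)
  | 3 => Matrix.single (0, 0) (1, 1) (Real.sqrt z : ℂ)

/-- The two-qubit amplitude damping channel `Φ_{x,y,z}`. -/
noncomputable def Phi (x y z : ℝ) (ρ : Matrix (Fin 2 × Fin 2) (Fin 2 × Fin 2) ℂ) :
    Matrix (Fin 2 × Fin 2) (Fin 2 × Fin 2) ℂ :=
  ∑ i : Fin 4, ADk x y z i * ρ * (ADk x y z i)ᴴ

/-- The probabilities `q_{P⊗P'}` of the Pauli twirl of `Φ_{x,y,z}`, with
`s₁ = √(1−x)` and `s₂ = √(1−2y−z)`. -/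
noncomputable def qcoef (x y z : ℝ) : Fin 4 → Fin 4 → ℝ
  | 0, 0 => ((1 + 2 * Real.sqrt (1 - x) + Real.sqrt (1 - 2*y - z)) / 4) ^ 2
  | 0, 3 => ((1 - Real.sqrt (1 - 2*y - z)) / 4) ^ 2
  | 3, 0 => ((1 - Real.sqrt (1 - 2*y - z)) / 4) ^ 2
  | 3, 3 => ((1 - 2 * Real.sqrt (1 - x) + Real.sqrt (1 - 2*y - z)) / 4) ^ 2
  | 0, 1 => ((Real.sqrt x + Real.sqrt y) / 4) ^ 2
  | 0, 2 => ((Real.sqrt x + Real.sqrt y) / 4) ^ 2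
  | 1, 0 => ((Real.sqrt x + Real.sqrt y) / 4) ^ 2
  | 2, 0 => ((Real.sqrt x + Real.sqrt y) / 4) ^ 2
  | 3, 1 => ((Real.sqrt x - Real.sqrt y) / 4) ^ 2
  | 3, 2 => ((Real.sqrt x - Real.sqrt y) / 4) ^ 2
  | 1, 3 => ((Real.sqrt x - Real.sqrt y) / 4) ^ 2
  | 2, 3 => ((Real.sqrt x - Real.sqrt y) / 4) ^ 2
  | 1, 1 => z / 16
  | 1, 2 => z / 16
  | 2, 1 => z / 16
  | 2, 2 => z / 16


noncomputable def pe : Fin 4 → Fin 2 → Fin 2 → ℂ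
  | 0, _, _ => 1
  | 1, _, _ => 1
  | 2, a, b => if a = b then 1 else -1
  | 3, a, b => if a = b then 1 else -1

def pf : Fin 4 → Fin 2 → Fin 2
  | 0, i => i
  | 1, 0 => 1
  | 1, 1 => 0
  | 2, 0 => 1
  | 2, 1 => 0
  | 3, i => i

lemma Cpq00 (σ : Matrix (Fin 2 × Fin 2) (Fin 2 × Fin 2) ℂ) :
    (pauli 0 ⊗ₖ pauli 0) * σ * (pauli 0 ⊗ₖ pauli 0)ᴴ =
    Matrix.of fun r s => pe 0 r.1 s.1 * pe 0 r.2 s.2 *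
      σ (pf 0 r.1, pf 0 r.2) (pf 0 s.1, pf 0 s.2) := by
  ext ⟨r1, r2⟩ ⟨s1, s2⟩
  fin_cases r1 <;> fin_cases r2 <;> fin_cases s1 <;> fin_cases s2 <;>
  · simp [pauli, pe, pf, Matrix.mul_apply, Fintype.sum_prod_type, Fin.sum_univ_two,
      Matrix.kroneckerMap_apply, Matrix.conjTranspose_apply]
    try ring_nf
    try simp [Complex.I_sq]

lemma Cpq01 (σ : Matrix (Fin 2 × Fin 2) (Fin 2 × Fin 2) ℂ) :
    (pauli 0 ⊗ₖ pauli 1) * σ * (pauli 0 ⊗ₖ pauli 1)ᴴ =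
    Matrix.of fun r s => pe 0 r.1 s.1 * pe 1 r.2 s.2 *
      σ (pf 0 r.1, pf 1 r.2) (pf 0 s.1, pf 1 s.2) := by
  ext ⟨r1, r2⟩ ⟨s1, s2⟩
  fin_cases r1 <;> fin_cases r2 <;> fin_cases s1 <;> fin_cases s2 <;>
  · simp [pauli, pe, pf, Matrix.mul_apply, Fintype.sum_prod_type, Fin.sum_univ_two,
      Matrix.kroneckerMap_apply, Matrix.conjTranspose_apply]
    try ring_nf
    try simp [Complex.I_sq]

lemma Cpq02 (σ : Matrix (Fin 2 × Fin 2) (Fin 2 × Fin 2) ℂ) :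
    (pauli 0 ⊗ₖ pauli 2) * σ * (pauli 0 ⊗ₖ pauli 2)ᴴ =
    Matrix.of fun r s => pe 0 r.1 s.1 * pe 2 r.2 s.2 *
      σ (pf 0 r.1, pf 2 r.2) (pf 0 s.1, pf 2 s.2) := by
  ext ⟨r1, r2⟩ ⟨s1, s2⟩
  fin_cases r1 <;> fin_cases r2 <;> fin_cases s1 <;> fin_cases s2 <;>
  · simp [pauli, pe, pf, Matrix.mul_apply, Fintype.sum_prod_type, Fin.sum_univ_two,
      Matrix.kroneckerMap_apply, Matrix.conjTranspose_apply]
    try ring_nf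
    try simp [Complex.I_sq]

lemma Cpq03 (σ : Matrix (Fin 2 × Fin 2) (Fin 2 × Fin 2) ℂ) :
    (pauli 0 ⊗ₖ pauli 3) * σ * (pauli 0 ⊗ₖ pauli 3)ᴴ =
    Matrix.of fun r s => pe 0 r.1 s.1 * pe 3 r.2 s.2 *
      σ (pf 0 r.1, pf 3 r.2) (pf 0 s.1, pf 3 s.2) := by
  ext ⟨r1, r2⟩ ⟨s1, s2⟩
  fin_cases r1 <;> fin_cases r2 <;> fin_cases s1 <;> fin_cases s2 <;>
  · simp [pauli, pe, pf, Matrix.mul_apply, Fintype.sum_prod_type, Fin.sum_univ_two,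
      Matrix.kroneckerMap_apply, Matrix.conjTranspose_apply]
    try ring_nf
    try simp [Complex.I_sq]

lemma Cpq10 (σ : Matrix (Fin 2 × Fin 2) (Fin 2 × Fin 2) ℂ) :
    (pauli 1 ⊗ₖ pauli 0) * σ * (pauli 1 ⊗ₖ pauli 0)ᴴ =
    Matrix.of fun r s => pe 1 r.1 s.1 * pe 0 r.2 s.2 *
      σ (pf 1 r.1, pf 0 r.2) (pf 1 s.1, pf 0 s.2) := by
  ext ⟨r1, r2⟩ ⟨s1, s2⟩
  fin_cases r1 <;> fin_cases r2 <;> fin_cases s1 <;> fin_cases s2 <;>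
  · simp [pauli, pe, pf, Matrix.mul_apply, Fintype.sum_prod_type, Fin.sum_univ_two,
      Matrix.kroneckerMap_apply, Matrix.conjTranspose_apply]
    try ring_nf
    try simp [Complex.I_sq]

lemma Cpq11 (σ : Matrix (Fin 2 × Fin 2) (Fin 2 × Fin 2) ℂ) :
    (pauli 1 ⊗ₖ pauli 1) * σ * (pauli 1 ⊗ₖ pauli 1)ᴴ =
    Matrix.of fun r s => pe 1 r.1 s.1 * pe 1 r.2 s.2 *
      σ (pf 1 r.1, pf 1 r.2) (pf 1 s.1, pf 1 s.2) := by
  ext ⟨r1, r2⟩ ⟨s1, s2⟩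
  fin_cases r1 <;> fin_cases r2 <;> fin_cases s1 <;> fin_cases s2 <;>
  · simp [pauli, pe, pf, Matrix.mul_apply, Fintype.sum_prod_type, Fin.sum_univ_two,
      Matrix.kroneckerMap_apply, Matrix.conjTranspose_apply]
    try ring_nf
    try simp [Complex.I_sq]

lemma Cpq12 (σ : Matrix (Fin 2 × Fin 2) (Fin 2 × Fin 2) ℂ) :
    (pauli 1 ⊗ₖ pauli 2) * σ * (pauli 1 ⊗ₖ pauli 2)ᴴ =
    Matrix.of fun r s => pe 1 r.1 s.1 * pe 2 r.2 s.2 *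
      σ (pf 1 r.1, pf 2 r.2) (pf 1 s.1, pf 2 s.2) := by
  ext ⟨r1, r2⟩ ⟨s1, s2⟩
  fin_cases r1 <;> fin_cases r2 <;> fin_cases s1 <;> fin_cases s2 <;>
  · simp [pauli, pe, pf, Matrix.mul_apply, Fintype.sum_prod_type, Fin.sum_univ_two,
      Matrix.kroneckerMap_apply, Matrix.conjTranspose_apply]
    try ring_nf
    try simp [Complex.I_sq]

lemma Cpq13 (σ : Matrix (Fin 2 × Fin 2) (Fin 2 × Fin 2) ℂ) :
    (pauli 1 ⊗ₖ pauli 3) * σ * (pauli 1 ⊗ₖ pauli 3)ᴴ =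
    Matrix.of fun r s => pe 1 r.1 s.1 * pe 3 r.2 s.2 *
      σ (pf 1 r.1, pf 3 r.2) (pf 1 s.1, pf 3 s.2) := by
  ext ⟨r1, r2⟩ ⟨s1, s2⟩
  fin_cases r1 <;> fin_cases r2 <;> fin_cases s1 <;> fin_cases s2 <;>
  · simp [pauli, pe, pf, Matrix.mul_apply, Fintype.sum_prod_type, Fin.sum_univ_two,
      Matrix.kroneckerMap_apply, Matrix.conjTranspose_apply]
    try ring_nf
    try simp [Complex.I_sq]

lemma Cpq20 (σ : Matrix (Fin 2 × Fin 2) (Fin 2 × Fin 2) ℂ) :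
    (pauli 2 ⊗ₖ pauli 0) * σ * (pauli 2 ⊗ₖ pauli 0)ᴴ =
    Matrix.of fun r s => pe 2 r.1 s.1 * pe 0 r.2 s.2 *
      σ (pf 2 r.1, pf 0 r.2) (pf 2 s.1, pf 0 s.2) := by
  ext ⟨r1, r2⟩ ⟨s1, s2⟩
  fin_cases r1 <;> fin_cases r2 <;> fin_cases s1 <;> fin_cases s2 <;>
  · simp [pauli, pe, pf, Matrix.mul_apply, Fintype.sum_prod_type, Fin.sum_univ_two,
      Matrix.kroneckerMap_apply, Matrix.conjTranspose_apply]
    try ring_nf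
    try simp [Complex.I_sq]

lemma Cpq21 (σ : Matrix (Fin 2 × Fin 2) (Fin 2 × Fin 2) ℂ) :
    (pauli 2 ⊗ₖ pauli 1) * σ * (pauli 2 ⊗ₖ pauli 1)ᴴ =
    Matrix.of fun r s => pe 2 r.1 s.1 * pe 1 r.2 s.2 *
      σ (pf 2 r.1, pf 1 r.2) (pf 2 s.1, pf 1 s.2) := by
  ext ⟨r1, r2⟩ ⟨s1, s2⟩
  fin_cases r1 <;> fin_cases r2 <;> fin_cases s1 <;> fin_cases s2 <;>
  · simp [pauli, pe, pf, Matrix.mul_apply, Fintype.sum_prod_type, Fin.sum_univ_two,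
      Matrix.kroneckerMap_apply, Matrix.conjTranspose_apply]
    try ring_nf
    try simp [Complex.I_sq]

lemma Cpq22 (σ : Matrix (Fin 2 × Fin 2) (Fin 2 × Fin 2) ℂ) :
    (pauli 2 ⊗ₖ pauli 2) * σ * (pauli 2 ⊗ₖ pauli 2)ᴴ =
    Matrix.of fun r s => pe 2 r.1 s.1 * pe 2 r.2 s.2 *
      σ (pf 2 r.1, pf 2 r.2) (pf 2 s.1, pf 2 s.2) := by
  ext ⟨r1, r2⟩ ⟨s1, s2⟩
  fin_cases r1 <;> fin_cases r2 <;> fin_cases s1 <;> fin_cases s2 <;>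
  · simp [pauli, pe, pf, Matrix.mul_apply, Fintype.sum_prod_type, Fin.sum_univ_two,
      Matrix.kroneckerMap_apply, Matrix.conjTranspose_apply]
    try ring_nf
    try simp [Complex.I_sq]

lemma Cpq23 (σ : Matrix (Fin 2 × Fin 2) (Fin 2 × Fin 2) ℂ) :
    (pauli 2 ⊗ₖ pauli 3) * σ * (pauli 2 ⊗ₖ pauli 3)ᴴ =
    Matrix.of fun r s => pe 2 r.1 s.1 * pe 3 r.2 s.2 *
      σ (pf 2 r.1, pf 3 r.2) (pf 2 s.1, pf 3 s.2) := by
  ext ⟨r1, r2⟩ ⟨s1, s2⟩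
  fin_cases r1 <;> fin_cases r2 <;> fin_cases s1 <;> fin_cases s2 <;>
  · simp [pauli, pe, pf, Matrix.mul_apply, Fintype.sum_prod_type, Fin.sum_univ_two,
      Matrix.kroneckerMap_apply, Matrix.conjTranspose_apply]
    try ring_nf
    try simp [Complex.I_sq]

lemma Cpq30 (σ : Matrix (Fin 2 × Fin 2) (Fin 2 × Fin 2) ℂ) :
    (pauli 3 ⊗ₖ pauli 0) * σ * (pauli 3 ⊗ₖ pauli 0)ᴴ =
    Matrix.of fun r s => pe 3 r.1 s.1 * pe 0 r.2 s.2 *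
      σ (pf 3 r.1, pf 0 r.2) (pf 3 s.1, pf 0 s.2) := by
  ext ⟨r1, r2⟩ ⟨s1, s2⟩
  fin_cases r1 <;> fin_cases r2 <;> fin_cases s1 <;> fin_cases s2 <;>
  · simp [pauli, pe, pf, Matrix.mul_apply, Fintype.sum_prod_type, Fin.sum_univ_two,
      Matrix.kroneckerMap_apply, Matrix.conjTranspose_apply]
    try ring_nf
    try simp [Complex.I_sq]

lemma Cpq31 (σ : Matrix (Fin 2 × Fin 2) (Fin 2 × Fin 2) ℂ) :
    (pauli 3 ⊗ₖ pauli 1) * σ * (pauli 3 ⊗ₖ pauli 1)ᴴ =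
    Matrix.of fun r s => pe 3 r.1 s.1 * pe 1 r.2 s.2 *
      σ (pf 3 r.1, pf 1 r.2) (pf 3 s.1, pf 1 s.2) := by
  ext ⟨r1, r2⟩ ⟨s1, s2⟩
  fin_cases r1 <;> fin_cases r2 <;> fin_cases s1 <;> fin_cases s2 <;>
  · simp [pauli, pe, pf, Matrix.mul_apply, Fintype.sum_prod_type, Fin.sum_univ_two,
      Matrix.kroneckerMap_apply, Matrix.conjTranspose_apply]
    try ring_nf
    try simp [Complex.I_sq]

lemma Cpq32 (σ : Matrix (Fin 2 × Fin 2) (Fin 2 × Fin 2) ℂ) :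
    (pauli 3 ⊗ₖ pauli 2) * σ * (pauli 3 ⊗ₖ pauli 2)ᴴ =
    Matrix.of fun r s => pe 3 r.1 s.1 * pe 2 r.2 s.2 *
      σ (pf 3 r.1, pf 2 r.2) (pf 3 s.1, pf 2 s.2) := by
  ext ⟨r1, r2⟩ ⟨s1, s2⟩
  fin_cases r1 <;> fin_cases r2 <;> fin_cases s1 <;> fin_cases s2 <;>
  · simp [pauli, pe, pf, Matrix.mul_apply, Fintype.sum_prod_type, Fin.sum_univ_two,
      Matrix.kroneckerMap_apply, Matrix.conjTranspose_apply]
    try ring_nf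
    try simp [Complex.I_sq]

lemma Cpq33 (σ : Matrix (Fin 2 × Fin 2) (Fin 2 × Fin 2) ℂ) :
    (pauli 3 ⊗ₖ pauli 3) * σ * (pauli 3 ⊗ₖ pauli 3)ᴴ =
    Matrix.of fun r s => pe 3 r.1 s.1 * pe 3 r.2 s.2 *
      σ (pf 3 r.1, pf 3 r.2) (pf 3 s.1, pf 3 s.2) := by
  ext ⟨r1, r2⟩ ⟨s1, s2⟩
  fin_cases r1 <;> fin_cases r2 <;> fin_cases s1 <;> fin_cases s2 <;>
  · simp [pauli, pe, pf, Matrix.mul_apply, Fintype.sum_prod_type, Fin.sum_univ_two,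
      Matrix.kroneckerMap_apply, Matrix.conjTranspose_apply]
    try ring_nf
    try simp [Complex.I_sq]


noncomputable def dd (x y z : ℝ) : Fin 2 × Fin 2 → ℂ := fun p =>
  if p = (0,0) then 1 else if p = (1,1) then (Real.sqrt (1 - 2*y - z) : ℂ)
  else (Real.sqrt (1 - x) : ℂ)

noncomputable def vv1 (x y : ℝ) : Fin 2 × Fin 2 → ℂ := fun p =>
  if p = (0,0) then (Real.sqrt x : ℂ) else if p = (1,0) then (Real.sqrt y : ℂ) else 0

def hh1 : Fin 2 × Fin 2 → Fin 2 × Fin 2 := fun p =>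
  if p = (0,0) then (0,1) else if p = (1,0) then (1,1) else (0,0)

noncomputable def vv2 (x y : ℝ) : Fin 2 × Fin 2 → ℂ := fun p =>
  if p = (0,0) then (Real.sqrt x : ℂ) else if p = (0,1) then (Real.sqrt y : ℂ) else 0

def hh2 : Fin 2 × Fin 2 → Fin 2 × Fin 2 := fun p =>
  if p = (0,0) then (1,0) else if p = (0,1) then (1,1) else (0,0)

noncomputable def vv3 (z : ℝ) : Fin 2 × Fin 2 → ℂ := fun p =>
  if p = (0,0) then (Real.sqrt z : ℂ) else 0

set_option maxHeartbeats 2000000 in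
lemma Phi_apply (x y z : ℝ) (σ : Matrix (Fin 2 × Fin 2) (Fin 2 × Fin 2) ℂ)
    (a b : Fin 2 × Fin 2) :
    Phi x y z σ a b = dd x y z a * dd x y z b * σ a b
      + vv1 x y a * vv1 x y b * σ (hh1 a) (hh1 b)
      + vv2 x y a * vv2 x y b * σ (hh2 a) (hh2 b)
      + vv3 z a * vv3 z b * σ (1,1) (1,1) := by
  obtain ⟨a1, a2⟩ := a; obtain ⟨b1, b2⟩ := b
  fin_cases a1 <;> fin_cases a2 <;> fin_cases b1 <;> fin_cases b2 <;>
  · simp [-Prod.mk_zero_zero, -Prod.mk_one_one, Prod.mk.injEq, Phi, ADk, dd, vv1, vv2, vv3, hh1, hh2, Matrix.mul_apply, Fintype.sum_prod_type,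
      Fin.sum_univ_four, Fin.sum_univ_two, Matrix.kroneckerMap_apply,
      Matrix.conjTranspose_apply, Matrix.diagonal_apply, Matrix.single,
      Matrix.add_apply, Matrix.sum_apply]
    try ring

set_option maxHeartbeats 16000000 in
/-- The Pauli twirl of `Φ_{x,y,z}` over the 16 two-qubit Paulis is the
Pauli channel with probabilities `q_{P⊗P'}`. -/
theorem pauli_twirl_of_Phi_xyz (x y z : ℝ)
    (hx0 : 0 ≤ x) (hy0 : 0 ≤ y) (hz0 : 0 ≤ z) (hx1 : x ≤ 1) (hyz : 2*y + z ≤ 1)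
    (ρ : Matrix (Fin 2 × Fin 2) (Fin 2 × Fin 2) ℂ) :
    ((16 : ℂ))⁻¹ • ∑ p : Fin 4, ∑ q : Fin 4,
        (pauli p ⊗ₖ pauli q) *
          Phi x y z ((pauli p ⊗ₖ pauli q) * ρ * (pauli p ⊗ₖ pauli q)ᴴ) *
          (pauli p ⊗ₖ pauli q)ᴴ
      = ∑ p : Fin 4, ∑ q : Fin 4, (qcoef x y z p q : ℂ) •
          ((pauli p ⊗ₖ pauli q) * ρ * (pauli p ⊗ₖ pauli q)ᴴ) := by
  have hzc : ((z : ℝ) : ℂ) = (Real.sqrt z : ℂ) * (Real.sqrt z : ℂ) := by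
    norm_cast; exact (Real.mul_self_sqrt hz0).symm
  ext r s
  obtain ⟨r1, r2⟩ := r; obtain ⟨s1, s2⟩ := s
  fin_cases r1 <;> fin_cases r2 <;> fin_cases s1 <;> fin_cases s2 <;>
  · simp only [Matrix.smul_apply, Matrix.sum_apply, Fin.sum_univ_four,
      Cpq00, Cpq01, Cpq02, Cpq03, Cpq10, Cpq11, Cpq12, Cpq13,
      Cpq20, Cpq21, Cpq22, Cpq23, Cpq30, Cpq31, Cpq32, Cpq33,
      Phi_apply, Matrix.of_apply, smul_eq_mul]
    simp [-Prod.mk_zero_zero, -Prod.mk_one_one, Prod.mk.injEq, pe, pf, dd, vv1, vv2, vv3,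
      hh1, hh2, qcoef]
    try rw [hzc]
    ring
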